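/- Let c1, c2 be conjunctions over disjoint sets of l variables each (l even, 3 ≤ l ≤ n/2), with ρ = l/2, under the uniform distribution D on {0,1}^n. Then R_ρ^D(c1, c2) ≥ Pr_{x∼D}[(number of unsatisfied literals of c1 in x ≤ ρ) or (number of unsatisfied literals of c2 in x ≤ ρ)], and in particular R_ρ^D(c1, c2) is at least the probability that a Binomial(l, 1/2) random variable is at most l/2, which is at least 1/2. -/

import Mathlib

open MeasureTheory

/-- The conjunction over index set `I` with sign pattern `σ`. -/
def conjOf {n : ℕ} (I : Finset (Fin n)) (σ : Fin n → Bool) (x : Fin n → Bool) : Bool :=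
  decide (∀ i ∈ I, x i = σ i)

/-- Number of unsatisfied literals of the conjunction `(I, σ)` in the point `x`. -/
def unsatCount {n : ℕ} (I : Finset (Fin n)) (σ : Fin n → Bool) (x : Fin n → Bool) : ℕ :=
  (I.filter fun i => x i ≠ σ i).card

lemma conjOf_congr {n : ℕ} (I : Finset (Fin n)) (σ : Fin n → Bool) {x y : Fin n → Bool}
    (h : ∀ i ∈ I, x i = y i) : conjOf I σ x = conjOf I σ y := by
  simp only [conjOf, decide_eq_decide]
  exact ⟨fun H i hi => (h i hi) ▸ H i hi, fun H i hi => (h i hi).symm ▸ H i hi⟩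

/-- Satisfy conjunction `(I,σ)` while not changing coordinates outside `I`. -/
lemma exists_fix {n : ℕ} (I J : Finset (Fin n)) (hd : Disjoint I J)
    (σ τ : Fin n → Bool) (x : Fin n → Bool) {ρ : ℕ} (h : unsatCount I σ x ≤ ρ) :
    ∃ z : Fin n → Bool, hammingDist x z ≤ ρ ∧ conjOf I σ z = true ∧
      conjOf J τ z = conjOf J τ x := by
  refine ⟨fun i => if i ∈ I then σ i else x i, ?_, ?_, ?_⟩
  · refine le_trans (Finset.card_le_card ?_) h
    intro i hi
    simp only [Finset.mem_filter, Finset.mem_univ, true_and] at hi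
    simp only [unsatCount, Finset.mem_filter]
    by_cases hiI : i ∈ I
    · exact ⟨hiI, by simpa [hiI] using hi⟩
    · simp [hiI] at hi
  · simp only [conjOf, decide_eq_true_eq]
    intro i hi
    simp [hi]
  · apply conjOf_congr
    intro i hi
    have : i ∉ I := fun hI => (Finset.disjoint_left.mp hd hI) hi
    simp [this]

lemma unsat_flip {n : ℕ} (I : Finset (Fin n)) (σ : Fin n → Bool) (x : Fin n → Bool) :
    unsatCount I σ (fun i => if i ∈ I then !(x i) else x i) = I.card - unsatCount I σ x := by
  have h1 : (I.filter fun i => (if i ∈ I then !(x i) else x i) ≠ σ i)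
      = I.filter fun i => ¬ (x i ≠ σ i) := by
    apply Finset.filter_congr
    intro i hi
    simp only [hi, if_true]
    cases x i <;> cases σ i <;> simp
  have h2 := Finset.card_filter_add_card_filter_not
    (s := I) (p := fun i => x i ≠ σ i)
  simp only [unsatCount, h1]
  omega

lemma counting {n l : ℕ} (hl : l % 2 = 0) (I : Finset (Fin n)) (hI : I.card = l)
    (σ : Fin n → Bool) :
    2 ^ n ≤ 2 * (Finset.univ.filter fun x : Fin n → Bool => unsatCount I σ x ≤ l / 2).card := by
  classical
  set f : (Fin n → Bool) → (Fin n → Bool) := fun x i => if i ∈ I then !(x i) else x i with hf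
  have hcompl : (Finset.univ.filter fun x : Fin n → Bool => ¬ unsatCount I σ x ≤ l / 2).card ≤
      (Finset.univ.filter fun x : Fin n → Bool => unsatCount I σ x ≤ l / 2).card := by
    apply Finset.card_le_card_of_injOn f
    · intro x hx
      simp only [Finset.mem_coe, Finset.mem_filter, Finset.mem_univ, true_and] at hx ⊢
      have heq : unsatCount I σ (f x) = I.card - unsatCount I σ x := unsat_flip I σ x
      have hle : unsatCount I σ x ≤ I.card := Finset.card_le_card (Finset.filter_subset _ _)
      omega
    · intro a _ b _ hab
      funext i
      have := congrFun hab i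
      simp only [hf] at this
      by_cases hi : i ∈ I <;> simpa [hi] using this
  have hsplit := Finset.card_filter_add_card_filter_not
    (s := (Finset.univ : Finset (Fin n → Bool))) (p := fun x => unsatCount I σ x ≤ l / 2)
  have hcard : (Finset.univ : Finset (Fin n → Bool)).card = 2 ^ n := by
    simp [Finset.card_univ]
  omega

/-- For disjoint conjunctions `c1, c2` of length `l` (l even, `3 ≤ l ≤ n/2`) and `ρ = l/2`,
under the uniform distribution the robust risk is at least the probability that `c1` or
`c2` has at most `ρ` unsatisfied literals, and in particular at least `1/2`. -/
theorem robust_risk_disjoint_conjunctions {n l : ℕ} (hl3 : 3 ≤ l) (hle : Even l)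
    (hn : 2 * l ≤ n) (I1 I2 : Finset (Fin n)) (hdisj : Disjoint I1 I2)
    (hI1 : I1.card = l) (hI2 : I2.card = l) (σ1 σ2 : Fin n → Bool) :
    (PMF.uniformOfFintype (Fin n → Bool)).toMeasure
        {x | unsatCount I1 σ1 x ≤ l / 2 ∨ unsatCount I2 σ2 x ≤ l / 2} ≤
      (PMF.uniformOfFintype (Fin n → Bool)).toMeasure
        {x | ∃ z : Fin n → Bool, hammingDist x z ≤ l / 2 ∧ conjOf I1 σ1 z ≠ conjOf I2 σ2 z} ∧
    (1 : ENNReal) / 2 ≤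
      (PMF.uniformOfFintype (Fin n → Bool)).toMeasure
        {x | ∃ z : Fin n → Bool, hammingDist x z ≤ l / 2 ∧ conjOf I1 σ1 z ≠ conjOf I2 σ2 z} := by
  classical
  have hsub : {x : Fin n → Bool | unsatCount I1 σ1 x ≤ l / 2 ∨ unsatCount I2 σ2 x ≤ l / 2} ⊆
      {x | ∃ z : Fin n → Bool, hammingDist x z ≤ l / 2 ∧ conjOf I1 σ1 z ≠ conjOf I2 σ2 z} := by
    intro x hx
    by_cases hne : conjOf I1 σ1 x ≠ conjOf I2 σ2 x
    · exact ⟨x, by simp [hammingDist], hne⟩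
    push_neg at hne
    by_cases h1 : conjOf I1 σ1 x = true
    · -- both true: flip one coordinate of I2
      obtain ⟨i0, hi0⟩ : I2.Nonempty := Finset.card_pos.mp (by omega)
      refine ⟨Function.update x i0 (!(σ2 i0)), ?_, ?_⟩
      · have hd1 : hammingDist x (Function.update x i0 (!(σ2 i0))) ≤ 1 := by
          have hss : (Finset.univ.filter fun i => x i ≠ Function.update x i0 (!(σ2 i0)) i)
              ⊆ {i0} := by
            intro i hi
            simp only [Finset.mem_filter, Finset.mem_univ, true_and] at hi
            by_contra hne2
            simp only [Finset.mem_singleton] at hne2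
            rw [Function.update_of_ne hne2] at hi
            exact hi rfl
          calc hammingDist x _ ≤ ({i0} : Finset (Fin n)).card := Finset.card_le_card hss
            _ = 1 := Finset.card_singleton i0
        omega
      · have hc1 : conjOf I1 σ1 (Function.update x i0 (!(σ2 i0))) = conjOf I1 σ1 x := by
          apply conjOf_congr
          intro i hi
          have : i ≠ i0 := fun h => (Finset.disjoint_left.mp hdisj (h ▸ hi)) hi0
          rw [Function.update_of_ne this]
        have hc2 : conjOf I2 σ2 (Function.update x i0 (!(σ2 i0))) = false := by
          simp only [conjOf, decide_eq_false_iff_not]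
          intro H
          have := H i0 hi0
          rw [Function.update_self] at this
          exact (Bool.not_ne_self (σ2 i0)) this
        rw [hc1, hc2, h1]
        simp
    · -- both false
      have h1' : conjOf I1 σ1 x = false := Bool.eq_false_iff.mpr h1
      have h2 : conjOf I2 σ2 x = false := by rw [← hne]; exact h1'
      rcases hx with hx | hx
      · obtain ⟨z, hz1, hz2, hz3⟩ := exists_fix I1 I2 hdisj σ1 σ2 x hx
        exact ⟨z, hz1, by rw [hz2, hz3, h2]; simp⟩
      · obtain ⟨z, hz1, hz2, hz3⟩ := exists_fix I2 I1 hdisj.symm σ2 σ1 x hx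
        exact ⟨z, hz1, by rw [hz2, hz3, h1']; simp⟩
  refine ⟨measure_mono hsub, ?_⟩
  have hcount := counting (Nat.even_iff.mp hle) I1 hI1 σ1
  set T := Finset.univ.filter fun x : Fin n → Bool => unsatCount I1 σ1 x ≤ l / 2 with hT
  have hsub2 : (↑T : Set (Fin n → Bool)) ⊆
      {x | ∃ z : Fin n → Bool, hammingDist x z ≤ l / 2 ∧ conjOf I1 σ1 z ≠ conjOf I2 σ2 z} := by
    intro x hx
    apply hsub
    simp only [hT, Finset.coe_filter, Set.mem_setOf_eq, Finset.mem_univ, true_and] at hx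
    exact Or.inl hx
  refine le_trans ?_ (measure_mono hsub2)
  rw [PMF.toMeasure_apply_finset]
  have hsum : ∑ x ∈ T, (PMF.uniformOfFintype (Fin n → Bool)) x
      = (T.card : ENNReal) * ((2 : ENNReal) ^ n)⁻¹ := by
    simp only [PMF.uniformOfFintype_apply, Finset.sum_const, nsmul_eq_mul]
    congr 1
    simp [Fintype.card_fun]
  rw [hsum]
  have h2n : ((2:ENNReal)^n) ≠ 0 := by positivity
  have h2n' : ((2:ENNReal)^n) ≠ ⊤ := ENNReal.pow_ne_top (by norm_num)
  rw [mul_comm, ← ENNReal.div_eq_inv_mul,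
    ENNReal.le_div_iff_mul_le (Or.inl h2n) (Or.inl h2n')]
  have e : (1:ENNReal)/2 * 2^n = 2^n / 2 := by
    rw [one_div, div_eq_mul_inv]; ring
  rw [e, ENNReal.div_le_iff_le_mul (by norm_num) (by norm_num)]
  calc ((2:ENNReal)^n) = ((2^n : ℕ) : ENNReal) := by push_cast; ring
    _ ≤ ((2*T.card : ℕ) : ENNReal) := Nat.cast_le.mpr hcount
    _ = T.card * 2 := by push_cast; ring
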